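/- For any $w \in S_\mathbb{Z}$, the Stanley symmetric function satisfies the coproduct formula $\Delta(F_w) = \sum_{(u,v)} F_u \otimes F_v$, where the sum is over pairs with $w = uv$ and $\ell(w) = \ell(u) + \ell(v)$, and $\Delta$ is the standard coproduct of the Hopf algebra of symmetric functions. -/

import Mathlib

/-- The group `S_ℤ` of permutations of `ℤ` moving only finitely many elements. -/
def SZ : Subgroup (Equiv.Perm ℤ) where
  carrier := {w | {i : ℤ | w i ≠ i}.Finite}
  one_mem' := by
    have h : {i : ℤ | (1 : Equiv.Perm ℤ) i ≠ i} = ∅ := by ext i; simp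
    show ({i : ℤ | (1 : Equiv.Perm ℤ) i ≠ i}).Finite
    rw [h]; exact Set.finite_empty
  mul_mem' := by
    intro a b ha hb
    show ({i : ℤ | (a * b) i ≠ i}).Finite
    refine (Set.Finite.union ha hb).subset ?_
    intro j hj
    simp only [Set.mem_setOf_eq] at hj
    by_contra hc
    simp only [Set.mem_union, Set.mem_setOf_eq, not_or, not_not] at hc
    exact hj (by rw [Equiv.Perm.mul_apply, hc.2, hc.1])
  inv_mem' := by
    intro a ha
    show ({i : ℤ | a⁻¹ i ≠ i}).Finite
    have h : {i : ℤ | a⁻¹ i ≠ i} = {i : ℤ | a i ≠ i} := by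
      ext i
      simp only [Set.mem_setOf_eq, ne_eq, Equiv.Perm.inv_eq_iff_eq]
      exact not_congr eq_comm
    rw [h]; exact ha

/-- The simple transposition `s_i = (i, i+1)` as an element of `S_ℤ`. -/
def sZ (i : ℤ) : SZ :=
  ⟨Equiv.swap i (i + 1), by
    show ({j : ℤ | Equiv.swap i (i + 1) j ≠ j}).Finite
    refine ((Set.finite_singleton (i + 1)).insert i).subset ?_
    intro j hj
    simp only [Set.mem_setOf_eq] at hj
    by_contra hc
    simp only [Set.mem_insert_iff, Set.mem_singleton_iff, not_or] at hc
    exact hj (Equiv.swap_apply_of_ne_of_ne hc.1 hc.2)⟩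

/-- Coxeter length of `w ∈ S_ℤ` = its number of inversions. -/
noncomputable def lenZ (w : SZ) : ℕ :=
  Nat.card {p : ℤ × ℤ | p.1 < p.2 ∧ (w : Equiv.Perm ℤ) p.2 < (w : Equiv.Perm ℤ) p.1}

/-- `l` is a reduced word for `w`: `w = s_{l 0} ⋯ s_{l (len-1)}` with
`len = ℓ(w)`. -/
def IsRedWord (w : SZ) (l : List ℤ) : Prop :=
  l.length = lenZ w ∧ (l.map sZ).prod = w

/-- `(a, b)` is a compatible pair: `b` is weakly increasing, strictly at ascents
of `a`. -/
def Compatible {σ : Type} [LinearOrder σ] (a : List ℤ) (b : List σ) : Prop :=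
  a.length = b.length ∧
    List.Chain' (fun p q : ℤ × σ => p.2 ≤ q.2 ∧ (p.1 < q.1 → p.2 < q.2)) (a.zip b)

/-- The content of a list of variables, as a monomial exponent vector. -/
noncomputable def content {σ : Type} (b : List σ) : σ →₀ ℕ :=
  (b.map fun i => Finsupp.single i 1).sum

/-- The coefficient of the monomial `x^m` in the Stanley symmetric function
`F_w` computed in the ordered alphabet `σ`: the number of pairs of a reduced
word for `w` and a compatible sequence with content `m`. -/
noncomputable def stanleyCoeff (σ : Type) [LinearOrder σ] (w : SZ) (m : σ →₀ ℕ) : ℕ :=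
  Nat.card {p : List ℤ × List σ // IsRedWord w p.1 ∧ Compatible p.1 p.2 ∧ content p.2 = m}

/-- The alphabet `x_0, x_{-1}, x_{-2}, …` of nonpositive variables. -/
abbrev NP := {i : ℤ // i ≤ 0}

/-- Two copies of the nonpositive alphabet, the first ordered entirely below
the second. -/
abbrev NP2 := Lex (NP ⊕ NP)

/-- A monomial in the first copy of the alphabet. -/
noncomputable def emb1 (m : NP →₀ ℕ) : NP2 →₀ ℕ :=
  m.mapDomain (fun i => toLex (Sum.inl i))

/-- A monomial in the second copy of the alphabet. -/
noncomputable def emb2 (m : NP →₀ ℕ) : NP2 →₀ ℕ :=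
  m.mapDomain (fun i => toLex (Sum.inr i))


/-! ### Section 1: inversion sets -/

def invS (w : SZ) : Set (ℤ × ℤ) :=
  {p : ℤ × ℤ | p.1 < p.2 ∧ (w : Equiv.Perm ℤ) p.2 < (w : Equiv.Perm ℤ) p.1}

lemma mem_invS {w : SZ} {x y : ℤ} :
    (x, y) ∈ invS w ↔ x < y ∧ (w : Equiv.Perm ℤ) y < (w : Equiv.Perm ℤ) x := Iff.rfl

lemma lenZ_eq_ncard (w : SZ) : lenZ w = (invS w).ncard :=
  Nat.card_coe_set_eq _

lemma invS_finite (w : SZ) : (invS w).Finite := by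
  have hS : ({i : ℤ | (w : Equiv.Perm ℤ) i ≠ i}).Finite := w.2
  set S := {i : ℤ | (w : Equiv.Perm ℤ) i ≠ i} with hSdef
  have : invS w ⊆ (S ×ˢ S) ∪ ((⋃ i ∈ S, {i} ×ˢ Set.Ioo i ((w : Equiv.Perm ℤ) i)) ∪
      (⋃ j ∈ S, Set.Ioo ((w : Equiv.Perm ℤ) j) j ×ˢ {j})) := by
    rintro ⟨x, y⟩ hxy
    rw [mem_invS] at hxy
    obtain ⟨hxy, hw⟩ := hxy
    by_cases hx : x ∈ S <;> by_cases hy : y ∈ S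
    · exact Or.inl ⟨hx, hy⟩
    · refine Or.inr (Or.inl ?_)
      simp only [Set.mem_setOf_eq, not_not, hSdef] at hy
      refine Set.mem_biUnion hx ?_
      exact ⟨rfl, Set.mem_Ioo.2 ⟨hxy, by rw [hy] at hw; exact hw⟩⟩
    · refine Or.inr (Or.inr ?_)
      simp only [Set.mem_setOf_eq, not_not, hSdef] at hx
      refine Set.mem_biUnion hy ?_
      exact ⟨Set.mem_Ioo.2 ⟨by rw [hx] at hw; exact hw, hxy⟩, rfl⟩
    · exfalso
      simp only [Set.mem_setOf_eq, not_not, hSdef] at hx hy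
      omega
  refine Set.Finite.subset ?_ this
  refine ((hS.prod hS).union (Set.Finite.union ?_ ?_))
  · exact hS.biUnion fun i _ => (Set.finite_singleton i).prod (Set.finite_Ioo _ _)
  · exact hS.biUnion fun j _ => (Set.finite_Ioo _ _).prod (Set.finite_singleton j)

lemma lenZ_one : lenZ (1 : SZ) = 0 := by
  rw [lenZ_eq_ncard]
  convert Set.ncard_empty (ℤ × ℤ)
  ext ⟨x, y⟩
  rw [mem_invS]
  simp only [Set.mem_empty_iff_false, iff_false, not_and]
  intro h
  simpa using not_lt.2 h.le

/-- strictly monotone elements of SZ are trivial -/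
lemma eq_one_of_strictMono (u : SZ) (h : ∀ x y : ℤ, x < y → (u : Equiv.Perm ℤ) x < (u : Equiv.Perm ℤ) y) :
    u = 1 := by
  by_contra hne
  have hS : ({i : ℤ | (u : Equiv.Perm ℤ) i ≠ i}).Finite := u.2
  have hne' : ({i : ℤ | (u : Equiv.Perm ℤ) i ≠ i}).Nonempty := by
    by_contra hempty
    apply hne
    rw [Set.not_nonempty_iff_eq_empty] at hempty
    ext x
    · by_contra hx
      exact (Set.eq_empty_iff_forall_notMem.1 hempty x) hx
  obtain ⟨m, hm, hmin⟩ := Set.exists_min_image _ id hS hne'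
  have hfix : ∀ x : ℤ, x < m → (u : Equiv.Perm ℤ) x = x := by
    intro x hx
    by_contra hxm
    exact absurd (hmin x hxm) (by simpa using hx)
  have hum : (u : Equiv.Perm ℤ) m ≠ m := hm
  have humgt : m < (u : Equiv.Perm ℤ) m := by
    rcases lt_or_gt_of_ne hum with h1 | h1
    · exfalso
      have h2 : (u : Equiv.Perm ℤ) ((u : Equiv.Perm ℤ) m) = (u : Equiv.Perm ℤ) m := hfix _ h1
      have := (u : Equiv.Perm ℤ).injective h2
      omega
    · exact h1
  set z := (u : Equiv.Perm ℤ)⁻¹ m with hz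
  have hzm : (u : Equiv.Perm ℤ) z = m := Equiv.apply_symm_apply _ m
  rcases lt_trichotomy z m with h1 | h1 | h1
  · rw [hfix z h1] at hzm; omega
  · rw [h1] at hzm; omega
  · have := h m z h1; omega

lemma lenZ_eq_zero_iff (u : SZ) : lenZ u = 0 ↔ u = 1 := by
  constructor
  · intro h
    rw [lenZ_eq_ncard] at h
    have hemp : invS u = ∅ := (Set.ncard_eq_zero (invS_finite u)).1 h
    refine eq_one_of_strictMono u fun x y hxy => ?_
    by_contra hc
    have hne : (u : Equiv.Perm ℤ) x ≠ (u : Equiv.Perm ℤ) y :=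
      fun he => absurd ((u : Equiv.Perm ℤ).injective he) (by omega)
    have hmem : (x, y) ∈ invS u := mem_invS.2 ⟨hxy, by omega⟩
    rw [hemp] at hmem
    exact hmem
  · rintro rfl; exact lenZ_one

/-! ### Section 2: multiplying by a simple transposition -/

lemma coe_sZ (i : ℤ) : ((sZ i : SZ) : Equiv.Perm ℤ) = Equiv.swap i (i + 1) := rfl

lemma sZ_mul_self (i : ℤ) : sZ i * sZ i = 1 := by
  apply Subtype.ext
  push_cast [coe_sZ]
  exact Equiv.swap_mul_self _ _

lemma swap_lt_swap (i v w : ℤ) (h : v ≠ w) :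
    Equiv.swap i (i+1) w < Equiv.swap i (i+1) v ↔
      (if (v = i ∧ w = i+1) ∨ (v = i+1 ∧ w = i) then v < w else w < v) := by
  simp only [Equiv.swap_apply_def]
  split_ifs <;> omega

lemma invS_sZ_mul (i : ℤ) (u : SZ) {a b : ℤ} (ha : (u : Equiv.Perm ℤ) a = i)
    (hb : (u : Equiv.Perm ℤ) b = i + 1) :
    (a < b → invS (sZ i * u) = insert (a, b) (invS u) ∧ (a, b) ∉ invS u) ∧
    (b < a → invS (sZ i * u) = invS u \ {(b, a)} ∧ (b, a) ∈ invS u) := by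
  have hxa : ∀ x : ℤ, (u : Equiv.Perm ℤ) x = i ↔ x = a := by
    intro x
    constructor
    · intro hx; exact (u : Equiv.Perm ℤ).injective (by rw [hx, ha])
    · rintro rfl; exact ha
  have hxb : ∀ x : ℤ, (u : Equiv.Perm ℤ) x = i + 1 ↔ x = b := by
    intro x
    constructor
    · intro hx; exact (u : Equiv.Perm ℤ).injective (by rw [hx, hb])
    · rintro rfl; exact hb
  have hmem : ∀ x y : ℤ, ((x, y) ∈ invS (sZ i * u) ↔
      (x < y ∧ if (x = a ∧ y = b) ∨ (x = b ∧ y = a) then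
          (u : Equiv.Perm ℤ) x < (u : Equiv.Perm ℤ) y
        else (u : Equiv.Perm ℤ) y < (u : Equiv.Perm ℤ) x)) := by
    intro x y
    rw [mem_invS]
    apply and_congr_right
    intro hxy
    have hne : (u : Equiv.Perm ℤ) x ≠ (u : Equiv.Perm ℤ) y := by
      intro he; exact absurd ((u : Equiv.Perm ℤ).injective he) (by omega)
    have hc : ((sZ i * u : SZ) : Equiv.Perm ℤ) = Equiv.swap i (i+1) * (u : Equiv.Perm ℤ) := by
      push_cast [coe_sZ]; rfl
    rw [hc]
    simp only [Equiv.Perm.mul_apply]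
    rw [swap_lt_swap i _ _ hne]
    refine iff_of_eq (if_congr ?_ rfl rfl)
    constructor
    · rintro (⟨h1, h2⟩ | ⟨h1, h2⟩)
      · exact Or.inl ⟨(hxa _).1 h1, (hxb _).1 h2⟩
      · exact Or.inr ⟨(hxb _).1 h1, (hxa _).1 h2⟩
    · rintro (⟨rfl, rfl⟩ | ⟨rfl, rfl⟩)
      · exact Or.inl ⟨ha, hb⟩
      · exact Or.inr ⟨hb, ha⟩
  have hne : a ≠ b := by
    intro he; rw [he, hb] at ha; omega
  constructor
  · intro hab
    have hnot : (a, b) ∉ invS u := by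
      rw [mem_invS, ha, hb]; omega
    refine ⟨?_, hnot⟩
    ext ⟨x, y⟩
    rw [hmem x y, Set.mem_insert_iff, mem_invS, Prod.mk.injEq]
    constructor
    · rintro ⟨hxy, hcond⟩
      by_cases hC : (x = a ∧ y = b) ∨ (x = b ∧ y = a)
      · rcases hC with ⟨rfl, rfl⟩ | ⟨rfl, rfl⟩
        · exact Or.inl ⟨rfl, rfl⟩
        · exfalso; omega
      · rw [if_neg hC] at hcond
        exact Or.inr ⟨hxy, hcond⟩
    · rintro (⟨rfl, rfl⟩ | ⟨hxy, hlt⟩)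
      · refine ⟨hab, ?_⟩
        rw [if_pos (Or.inl ⟨rfl, rfl⟩), ha, hb]
        omega
      · refine ⟨hxy, ?_⟩
        by_cases hC : (x = a ∧ y = b) ∨ (x = b ∧ y = a)
        · rcases hC with ⟨rfl, rfl⟩ | ⟨rfl, rfl⟩
          · exfalso; rw [ha, hb] at hlt; omega
          · exfalso; omega
        · rw [if_neg hC]; exact hlt
  · intro hba
    have hin : (b, a) ∈ invS u := by
      rw [mem_invS, ha, hb]; omega
    refine ⟨?_, hin⟩
    ext ⟨x, y⟩
    rw [hmem x y, Set.mem_diff, mem_invS, Set.mem_singleton_iff, Prod.mk.injEq]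
    constructor
    · rintro ⟨hxy, hcond⟩
      by_cases hC : (x = a ∧ y = b) ∨ (x = b ∧ y = a)
      · rcases hC with ⟨rfl, rfl⟩ | ⟨rfl, rfl⟩
        · exfalso; omega
        · exfalso; rw [if_pos (Or.inr ⟨rfl, rfl⟩), ha, hb] at hcond; omega
      · rw [if_neg hC] at hcond
        refine ⟨⟨hxy, hcond⟩, ?_⟩
        intro hePair
        exact hC (Or.inr hePair)
    · rintro ⟨⟨hxy, hlt⟩, hnotba⟩
      refine ⟨hxy, ?_⟩
      by_cases hC : (x = a ∧ y = b) ∨ (x = b ∧ y = a)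
      · rcases hC with ⟨rfl, rfl⟩ | ⟨rfl, rfl⟩
        · exfalso; rw [ha, hb] at hlt; omega
        · exact absurd ⟨rfl, rfl⟩ hnotba
      · rw [if_neg hC]; exact hlt

lemma lenZ_sZ_mul_of_lt (i : ℤ) (u : SZ) {a b : ℤ} (ha : (u : Equiv.Perm ℤ) a = i)
    (hb : (u : Equiv.Perm ℤ) b = i + 1) (hab : a < b) :
    lenZ (sZ i * u) = lenZ u + 1 := by
  obtain ⟨heq, hnot⟩ := (invS_sZ_mul i u ha hb).1 hab
  rw [lenZ_eq_ncard, lenZ_eq_ncard, heq,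
    Set.ncard_insert_of_notMem hnot (invS_finite u)]

lemma lenZ_sZ_mul_of_gt (i : ℤ) (u : SZ) {a b : ℤ} (ha : (u : Equiv.Perm ℤ) a = i)
    (hb : (u : Equiv.Perm ℤ) b = i + 1) (hba : b < a) :
    lenZ u = lenZ (sZ i * u) + 1 := by
  obtain ⟨heq, hin⟩ := (invS_sZ_mul i u ha hb).2 hba
  rw [lenZ_eq_ncard, lenZ_eq_ncard, heq, eq_comm]
  exact Set.ncard_diff_singleton_add_one hin (invS_finite u)

lemma lenZ_sZ_mul_cases (i : ℤ) (u : SZ) :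
    lenZ (sZ i * u) = lenZ u + 1 ∨ lenZ u = lenZ (sZ i * u) + 1 := by
  have ha : (u : Equiv.Perm ℤ) ((u : Equiv.Perm ℤ)⁻¹ i) = i := Equiv.apply_symm_apply _ _
  have hb : (u : Equiv.Perm ℤ) ((u : Equiv.Perm ℤ)⁻¹ (i+1)) = i + 1 := Equiv.apply_symm_apply _ _
  have hne : (u : Equiv.Perm ℤ)⁻¹ i ≠ (u : Equiv.Perm ℤ)⁻¹ (i+1) := by
    intro he; rw [he, hb] at ha; omega
  rcases lt_or_gt_of_ne hne with h | h
  · exact Or.inl (lenZ_sZ_mul_of_lt i u ha hb h)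
  · exact Or.inr (lenZ_sZ_mul_of_gt i u ha hb h)

lemma lenZ_prod_le (l : List ℤ) : lenZ ((l.map sZ).prod) ≤ l.length := by
  induction l with
  | nil => simp [lenZ_one]
  | cons i t ih =>
    simp only [List.map_cons, List.prod_cons, List.length_cons]
    rcases lenZ_sZ_mul_cases i ((t.map sZ).prod) with h | h <;> omega

lemma lenZ_mul_le (u v : SZ) : lenZ (u * v) ≤ lenZ u + lenZ v := by
  classical
  have h1 : Finite ↥(invS v) := (invS_finite v).to_subtype
  have h2 : Finite ↥(invS u) := (invS_finite u).to_subtype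
  have hcoe : ∀ x : ℤ, ((u * v : SZ) : Equiv.Perm ℤ) x
      = (u : Equiv.Perm ℤ) ((v : Equiv.Perm ℤ) x) := fun _ => rfl
  let f : ↥(invS (u * v)) → ↥(invS v) ⊕ ↥(invS u) := fun p =>
    if hvy : (v : Equiv.Perm ℤ) p.1.2 < (v : Equiv.Perm ℤ) p.1.1 then
      Sum.inl ⟨p.1, ⟨p.2.1, hvy⟩⟩
    else
      Sum.inr ⟨((v : Equiv.Perm ℤ) p.1.1, (v : Equiv.Perm ℤ) p.1.2), by
        have hxy : p.1.1 < p.1.2 := p.2.1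
        have hne : (v : Equiv.Perm ℤ) p.1.1 ≠ (v : Equiv.Perm ℤ) p.1.2 := by
          intro he; exact absurd ((v : Equiv.Perm ℤ).injective he) (by omega)
        have hlt : (v : Equiv.Perm ℤ) p.1.1 < (v : Equiv.Perm ℤ) p.1.2 := by
          rcases lt_or_gt_of_ne hne with h | h
          · exact h
          · exact absurd h hvy
        have huv : ((u * v : SZ) : Equiv.Perm ℤ) p.1.2 < ((u * v : SZ) : Equiv.Perm ℤ) p.1.1 := p.2.2
        rw [hcoe, hcoe] at huv
        exact ⟨hlt, huv⟩⟩
  have hinj : Function.Injective f := by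
    intro p q hpq
    apply Subtype.ext
    by_cases hp : (v : Equiv.Perm ℤ) p.1.2 < (v : Equiv.Perm ℤ) p.1.1 <;>
      by_cases hq : (v : Equiv.Perm ℤ) q.1.2 < (v : Equiv.Perm ℤ) q.1.1 <;>
      simp only [f, dif_pos, dif_neg, hp, hq, not_false_iff, dite_true, dite_false,
        Sum.inl.injEq, Sum.inr.injEq, Subtype.mk.injEq, Prod.mk.injEq, reduceCtorEq] at hpq
    · exact Subtype.mk.inj hpq
    · exact Prod.ext ((v : Equiv.Perm ℤ).injective (Prod.mk.inj (Subtype.mk.inj hpq)).1) ((v : Equiv.Perm ℤ).injective (Prod.mk.inj (Subtype.mk.inj hpq)).2)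
  calc lenZ (u * v) = Nat.card ↥(invS (u * v)) := rfl
    _ ≤ Nat.card (↥(invS v) ⊕ ↥(invS u)) := Nat.card_le_card_of_injective f hinj
    _ = lenZ v + lenZ u := by rw [Nat.card_sum]; rfl
    _ = lenZ u + lenZ v := by omega

/-! ### Section 3: reduced words -/

lemma exists_descent (u : SZ) (h : u ≠ 1) :
    ∃ i : ℤ, (u : Equiv.Perm ℤ)⁻¹ (i + 1) < (u : Equiv.Perm ℤ)⁻¹ i := by
  by_contra hc
  push_neg at hc
  have hmono : StrictMono fun i : ℤ => (u : Equiv.Perm ℤ)⁻¹ i := by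
    apply strictMono_int_of_lt_succ
    intro n
    rcases lt_or_eq_of_le (hc n) with h1 | h1
    · exact h1
    · exfalso
      have := (u : Equiv.Perm ℤ)⁻¹.injective h1
      omega
  have hinv : (u⁻¹ : SZ) = 1 := by
    apply eq_one_of_strictMono
    intro x y hxy
    have hco : ((u⁻¹ : SZ) : Equiv.Perm ℤ) = ((u : Equiv.Perm ℤ))⁻¹ := rfl
    rw [hco]
    exact hmono hxy
  exact h (by rwa [inv_eq_one] at hinv)

lemma descent_len (u : SZ) (i : ℤ) (h : (u : Equiv.Perm ℤ)⁻¹ (i + 1) < (u : Equiv.Perm ℤ)⁻¹ i) :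
    lenZ u = lenZ (sZ i * u) + 1 :=
  lenZ_sZ_mul_of_gt i u (Equiv.apply_symm_apply _ _) (Equiv.apply_symm_apply _ _) h

lemma redword_one : IsRedWord 1 [] := by
  constructor
  · simp [lenZ_one]
  · simp

lemma exists_redword (u : SZ) : ∃ l, IsRedWord u l := by
  suffices H : ∀ n u, lenZ u = n → ∃ l, IsRedWord u l from H _ u rfl
  intro n
  induction n using Nat.strong_induction_on with
  | _ n ih =>
    intro u hu
    rcases eq_or_ne u 1 with rfl | hne
    · exact ⟨[], redword_one⟩
    · obtain ⟨i, hi⟩ := exists_descent u hne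
      have hlen := descent_len u i hi
      have hlt : lenZ (sZ i * u) < n := by omega
      obtain ⟨l, hl⟩ := ih _ hlt _ rfl
      refine ⟨i :: l, ?_, ?_⟩
      · simp only [List.length_cons, hl.1]; omega
      · simp only [List.map_cons, List.prod_cons, hl.2]
        rw [← mul_assoc, sZ_mul_self, one_mul]

lemma redword_cons {w : SZ} {i : ℤ} {t : List ℤ} (h : IsRedWord w (i :: t)) :
    IsRedWord (sZ i * w) t ∧ lenZ w = lenZ (sZ i * w) + 1 := by
  obtain ⟨hlen, hprod⟩ := h
  simp only [List.map_cons, List.prod_cons] at hprod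
  simp only [List.length_cons] at hlen
  have hp : (t.map sZ).prod = sZ i * w := by
    rw [← hprod, ← mul_assoc, sZ_mul_self, one_mul]
  have hle : lenZ (sZ i * w) ≤ t.length := hp ▸ lenZ_prod_le t
  rcases lenZ_sZ_mul_cases i w with h1 | h1
  · omega
  · exact ⟨⟨by omega, hp⟩, h1⟩

lemma redwords_finite (w : SZ) : {l : List ℤ | IsRedWord w l}.Finite := by
  suffices H : ∀ n w, lenZ w = n → {l : List ℤ | IsRedWord w l}.Finite from H _ w rfl
  intro n
  induction n using Nat.strong_induction_on with
  | _ n ih =>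
    intro w hw
    rcases Nat.eq_zero_or_pos n with rfl | hpos
    · refine (Set.finite_singleton ([] : List ℤ)).subset ?_
      intro l hl
      have : l.length = 0 := by rw [hl.1, hw]
      simpa [List.length_eq_zero_iff] using this
    · set D := {i : ℤ | lenZ (sZ i * w) < lenZ w} with hDdef
      have hD : D.Finite := by
        set f : ℤ → ℤ × ℤ := fun i => ((w : Equiv.Perm ℤ)⁻¹ (i + 1), (w : Equiv.Perm ℤ)⁻¹ i) with hf
        have hfinj : Function.Injective f := by
          intro i j hij
          simp only [hf, Prod.mk.injEq] at hij
          have := (w : Equiv.Perm ℤ)⁻¹.injective hij.2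
          exact this
        have hsub : D ⊆ f ⁻¹' invS w := by
          intro i hi
          have ha : (w : Equiv.Perm ℤ) ((w : Equiv.Perm ℤ)⁻¹ i) = i := Equiv.apply_symm_apply _ _
          have hb : (w : Equiv.Perm ℤ) ((w : Equiv.Perm ℤ)⁻¹ (i+1)) = i + 1 := Equiv.apply_symm_apply _ _
          have hne : (w : Equiv.Perm ℤ)⁻¹ i ≠ (w : Equiv.Perm ℤ)⁻¹ (i+1) := by
            intro he; rw [he, hb] at ha; omega
          rcases lt_or_gt_of_ne hne with h1 | h1
          · exfalso
            have := lenZ_sZ_mul_of_lt i w ha hb h1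
            have hi' : lenZ (sZ i * w) < lenZ w := hi
            omega
          · exact Set.mem_preimage.2 ((invS_sZ_mul i w ha hb).2 h1).2
        exact ((invS_finite w).preimage (hfinj.injOn)).subset hsub
      have hsub : {l : List ℤ | IsRedWord w l} ⊆
          ⋃ i ∈ D, (List.cons i) '' {l : List ℤ | IsRedWord (sZ i * w) l} := by
        intro l hl
        match l with
        | [] =>
          exfalso
          have : (0 : ℕ) = lenZ w := hl.1
          omega
        | i :: t =>
          obtain ⟨ht, hlen⟩ := redword_cons hl
          refine Set.mem_biUnion (show i ∈ D from ?_) ⟨t, ht, rfl⟩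
          simp only [hDdef, Set.mem_setOf_eq]
          omega
      refine Set.Finite.subset ?_ hsub
      refine hD.biUnion fun i hi => ?_
      have hi' : lenZ (sZ i * w) < n := by
        have : lenZ (sZ i * w) < lenZ w := hi
        omega
      exact (ih _ hi' _ rfl).image _

lemma redword_append {w : SZ} {l1 l2 : List ℤ} (h : IsRedWord w (l1 ++ l2)) :
    IsRedWord ((l1.map sZ).prod) l1 ∧ IsRedWord ((l2.map sZ).prod) l2 ∧
      w = (l1.map sZ).prod * (l2.map sZ).prod ∧
      lenZ w = lenZ ((l1.map sZ).prod) + lenZ ((l2.map sZ).prod) := by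
  obtain ⟨hlen, hprod⟩ := h
  rw [List.length_append] at hlen
  rw [List.map_append, List.prod_append] at hprod
  have h1 := lenZ_prod_le l1
  have h2 := lenZ_prod_le l2
  have hle : lenZ w ≤ lenZ ((l1.map sZ).prod) + lenZ ((l2.map sZ).prod) := by
    rw [← hprod]
    exact lenZ_mul_le _ _
  have e1 : lenZ ((l1.map sZ).prod) = l1.length := by omega
  have e2 : lenZ ((l2.map sZ).prod) = l2.length := by omega
  exact ⟨⟨e1.symm, rfl⟩, ⟨e2.symm, rfl⟩, hprod.symm, by omega⟩

lemma redword_join {u v : SZ} {l1 l2 : List ℤ} (h1 : IsRedWord u l1) (h2 : IsRedWord v l2)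
    (hl : lenZ (u * v) = lenZ u + lenZ v) : IsRedWord (u * v) (l1 ++ l2) := by
  constructor
  · rw [List.length_append, h1.1, h2.1, hl]
  · rw [List.map_append, List.prod_append, h1.2, h2.2]

/-! ### Section 4: content, compatibility, and the two-alphabet splitting -/

def inl' : NP → NP2 := fun x => toLex (Sum.inl x)
def inr' : NP → NP2 := fun x => toLex (Sum.inr x)

lemma inl'_strictMono : StrictMono inl' := fun _ _ h => Sum.Lex.inl_lt_inl_iff.2 h
lemma inr'_strictMono : StrictMono inr' := fun _ _ h => Sum.Lex.inr_lt_inr_iff.2 h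

def leftsOf (b : List NP2) : List NP := b.filterMap fun x => (ofLex x).getLeft?
def rightsOf (b : List NP2) : List NP := b.filterMap fun x => (ofLex x).getRight?

lemma leftsOf_inl (b : List NP) : leftsOf (b.map inl') = b := by
  rw [leftsOf, List.filterMap_map]
  have : ((fun x : NP2 => (ofLex x).getLeft?) ∘ inl') = some := rfl
  rw [this, List.filterMap_some]

lemma filterMap_const_none {α β : Type} (l : List α) :
    List.filterMap (fun _ => (none : Option β)) l = [] := by
  induction l with
  | nil => rfl
  | cons h t ih => rw [List.filterMap_cons]; exact ih

lemma leftsOf_inr (b : List NP) : leftsOf (b.map inr') = [] := by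
  rw [leftsOf, List.filterMap_map]
  have h : ((fun x : NP2 => (ofLex x).getLeft?) ∘ inr') = fun _ => (none : Option NP) := rfl
  rw [h, filterMap_const_none]

lemma rightsOf_inr (b : List NP) : rightsOf (b.map inr') = b := by
  rw [rightsOf, List.filterMap_map]
  have : ((fun x : NP2 => (ofLex x).getRight?) ∘ inr') = some := rfl
  rw [this, List.filterMap_some]

lemma rightsOf_inl (b : List NP) : rightsOf (b.map inl') = [] := by
  rw [rightsOf, List.filterMap_map]
  have h : ((fun x : NP2 => (ofLex x).getRight?) ∘ inl') = fun _ => (none : Option NP) := rfl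
  rw [h, filterMap_const_none]

lemma leftsOf_append (b c : List NP2) : leftsOf (b ++ c) = leftsOf b ++ leftsOf c :=
  List.filterMap_append

lemma rightsOf_append (b c : List NP2) : rightsOf (b ++ c) = rightsOf b ++ rightsOf c :=
  List.filterMap_append

/-- every weakly increasing list over the doubled alphabet splits -/
lemma sorted_split (b : List NP2) (hs : List.Chain' (· ≤ ·) b) :
    b = (leftsOf b).map inl' ++ (rightsOf b).map inr' := by
  induction b with
  | nil => rfl
  | cons x t ih =>
    have ht : List.Chain' (· ≤ ·) t := hs.tail
    have iht := ih ht
    match hx : ofLex x with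
    | Sum.inl a =>
      have hx' : x = inl' a := by
        rw [inl', ← hx]; rfl
      rw [hx']
      have hL : leftsOf (inl' a :: t) = a :: leftsOf t := by
        rw [leftsOf, List.filterMap_cons]
        rfl
      have hR : rightsOf (inl' a :: t) = rightsOf t := by
        rw [rightsOf, List.filterMap_cons]
        rfl
      rw [hL, hR, List.map_cons, List.cons_append]
      exact congrArg _ iht
    | Sum.inr a =>
      have hx' : x = inr' a := by
        rw [inr', ← hx]; rfl
      rw [hx']
      have hLnil : leftsOf t = [] := by
        cases hL : leftsOf t with
        | nil => rfl
        | cons c rest =>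
          exfalso
          rw [hL, List.map_cons, List.cons_append] at iht
          rw [iht] at hs
          have hle : x ≤ inl' c := (List.isChain_cons_cons.1 hs).1
          have hlt : inl' c < x := by
            rw [hx', inl', inr']
            exact Sum.Lex.inl_lt_inr _ _
          exact absurd hle (not_le.2 hlt)
      have hL : leftsOf (inr' a :: t) = leftsOf t := by
        rw [leftsOf, List.filterMap_cons]; rfl
      have hR : rightsOf (inr' a :: t) = a :: rightsOf t := by
        rw [rightsOf, List.filterMap_cons]; rfl
      rw [hLnil] at iht
      simp only [List.map_nil, List.nil_append] at iht
      rw [hL, hR, hLnil]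
      simp only [List.map_nil, List.nil_append, List.map_cons]
      exact congrArg _ iht

lemma compatible_chain_snd {σ : Type} [LinearOrder σ] {a : List ℤ} {b : List σ}
    (h : Compatible a b) : List.Chain' (· ≤ ·) b := by
  obtain ⟨hlen, hz⟩ := h
  have hb : List.map Prod.snd (a.zip b) = b := List.map_snd_zip (le_of_eq hlen.symm)
  rw [← hb]; unfold List.Chain'; rw [List.isChain_map]
  exact List.IsChain.imp (fun p q hpq => hpq.1) hz

lemma compatible_map_iff {σ τ : Type} [LinearOrder σ] [LinearOrder τ] {f : σ → τ}
    (hf : StrictMono f) {a : List ℤ} {b : List σ} :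
    Compatible a (b.map f) ↔ Compatible a b := by
  unfold Compatible
  rw [List.length_map, List.zip_map_right]; unfold List.Chain'; rw [List.isChain_map]
  constructor
  · rintro ⟨h1, h2⟩
    refine ⟨h1, h2.imp fun p q hpq => ?_⟩
    simp only [Prod.map, id] at hpq
    exact ⟨hf.le_iff_le.1 hpq.1, fun hlt => hf.lt_iff_lt.1 (hpq.2 hlt)⟩
  · rintro ⟨h1, h2⟩
    refine ⟨h1, h2.imp fun p q hpq => ?_⟩
    simp only [Prod.map, id]
    exact ⟨hf.le_iff_le.2 hpq.1, fun hlt => hf.lt_iff_lt.2 (hpq.2 hlt)⟩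

lemma compatible_split {σ : Type} [LinearOrder σ] {a1 a2 : List ℤ} {b1 b2 : List σ}
    (h1 : a1.length = b1.length) (h : Compatible (a1 ++ a2) (b1 ++ b2)) :
    Compatible a1 b1 ∧ Compatible a2 b2 := by
  obtain ⟨hlen, hz⟩ := h
  rw [List.length_append, List.length_append] at hlen
  have h2 : a2.length = b2.length := by omega
  unfold List.Chain' at hz; rw [List.zip_append h1, List.isChain_append] at hz
  exact ⟨⟨h1, hz.1⟩, ⟨h2, hz.2.1⟩⟩

lemma compatible_join {a1 a2 : List ℤ} {b1 b2 : List NP}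
    (h1 : Compatible a1 b1) (h2 : Compatible a2 b2) :
    Compatible (a1 ++ a2) (b1.map inl' ++ b2.map inr') := by
  have h1' : Compatible a1 (b1.map inl') := (compatible_map_iff inl'_strictMono).2 h1
  have h2' : Compatible a2 (b2.map inr') := (compatible_map_iff inr'_strictMono).2 h2
  refine ⟨?_, ?_⟩
  · rw [List.length_append, List.length_append, h1'.1, h2'.1]
  · unfold List.Chain'; rw [List.zip_append h1'.1, List.isChain_append]
    refine ⟨h1'.2, h2'.2, ?_⟩
    intro x hx y hy
    have hx2 : x.2 ∈ b1.map inl' := (List.of_mem_zip (List.mem_of_mem_getLast? hx)).2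
    have hy2 : y.2 ∈ b2.map inr' := (List.of_mem_zip (List.mem_of_mem_head? hy)).2
    obtain ⟨c, _, hc⟩ := List.mem_map.1 hx2
    obtain ⟨d, _, hd⟩ := List.mem_map.1 hy2
    have hlt : x.2 < y.2 := by
      rw [← hc, ← hd, inl', inr']
      exact Sum.Lex.inl_lt_inr _ _
    exact ⟨hlt.le, fun _ => hlt⟩

/-! content -/

lemma content_append {σ : Type} (b1 b2 : List σ) :
    content (b1 ++ b2) = content b1 + content b2 := by
  rw [content, content, content, List.map_append, List.sum_append]

lemma content_map {σ τ : Type} (f : σ → τ) (b : List σ) :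
    content (b.map f) = (content b).mapDomain f := by
  induction b with
  | nil => simp [content, Finsupp.mapDomain_zero]
  | cons h t ih =>
    simp only [content, List.map_cons, List.sum_cons] at *
    rw [ih, Finsupp.mapDomain_add, Finsupp.mapDomain_single]

lemma content_count {σ : Type} [DecidableEq σ] (b : List σ) (x : σ) :
    content b x = b.count x := by
  induction b with
  | nil => simp [content]
  | cons h t ih =>
    simp only [content, List.map_cons, List.sum_cons, Finsupp.add_apply, List.count_cons] at *
    rw [ih, Finsupp.single_apply]
    by_cases hxh : h = x
    · subst hxh; simp [add_comm]
    · rw [if_neg hxh, if_neg (by simpa using hxh)]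
      omega

lemma content_fiber_finite {σ : Type} (m : σ →₀ ℕ) : {b : List σ | content b = m}.Finite := by
  classical
  rcases Set.eq_empty_or_nonempty {b : List σ | content b = m} with he | ⟨b0, hb0⟩
  · rw [he]; exact Set.finite_empty
  · refine (b0.permutations.toFinset : Finset (List σ)).finite_toSet.subset ?_
    intro b hb
    simp only [List.mem_toFinset, Finset.mem_coe, List.mem_permutations]
    rw [List.perm_iff_count]
    intro x
    rw [← content_count, ← content_count, hb, hb0]

lemma coeffSet_finite (σ : Type) [LinearOrder σ] (w : SZ) (m : σ →₀ ℕ) :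
    {p : List ℤ × List σ | IsRedWord w p.1 ∧ Compatible p.1 p.2 ∧ content p.2 = m}.Finite := by
  refine Set.Finite.subset ((redwords_finite w).prod (content_fiber_finite m)) ?_
  rintro ⟨a, b⟩ ⟨h1, _, h3⟩
  exact ⟨h1, h3⟩

lemma stanleyCoeff_eq_toFinset_card (σ : Type) [LinearOrder σ] (w : SZ) (m : σ →₀ ℕ) :
    stanleyCoeff σ w m = (coeffSet_finite σ w m).toFinset.card := by
  rw [stanleyCoeff]
  have h1 : Nat.card {p : List ℤ × List σ // IsRedWord w p.1 ∧ Compatible p.1 p.2 ∧ content p.2 = m}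
      = ({p : List ℤ × List σ | IsRedWord w p.1 ∧ Compatible p.1 p.2 ∧ content p.2 = m}).ncard :=
    Nat.card_coe_set_eq _
  rw [h1, Set.ncard_eq_toFinset_card _ (coeffSet_finite σ w m)]

/-! ### Section 5: two-alphabet monomials and the master splitting lemma -/

lemma inlNP_injective : Function.Injective (fun i : NP => toLex (Sum.inl i : NP ⊕ NP)) := by
  intro x y h
  have := congrArg ofLex h
  simpa using this

lemma inrNP_injective : Function.Injective (fun i : NP => toLex (Sum.inr i : NP ⊕ NP)) := by
  intro x y h
  have := congrArg ofLex h
  simpa using this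

lemma emb_cancel {c1 c2 m1 m2 : NP →₀ ℕ} (h : emb1 c1 + emb2 c2 = emb1 m1 + emb2 m2) :
    c1 = m1 ∧ c2 = m2 := by
  have hl : ∀ x : NP, ∀ c : NP →₀ ℕ, (emb2 c) (toLex (Sum.inl x)) = 0 := by
    intro x c
    refine Finsupp.mapDomain_notin_range _ _ ?_
    rintro ⟨y, hy⟩
    have := congrArg ofLex hy
    simp at this
  have hr : ∀ x : NP, ∀ c : NP →₀ ℕ, (emb1 c) (toLex (Sum.inr x)) = 0 := by
    intro x c
    refine Finsupp.mapDomain_notin_range _ _ ?_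
    rintro ⟨y, hy⟩
    have := congrArg ofLex hy
    simp at this
  constructor
  · ext x
    have h1 := congrArg (fun f : NP2 →₀ ℕ => f (toLex (Sum.inl x))) h
    simp only [Finsupp.add_apply] at h1
    rw [hl, hl, emb1, emb1, Finsupp.mapDomain_apply inlNP_injective,
      Finsupp.mapDomain_apply inlNP_injective] at h1
    simpa using h1
  · ext x
    have h1 := congrArg (fun f : NP2 →₀ ℕ => f (toLex (Sum.inr x))) h
    simp only [Finsupp.add_apply] at h1
    rw [hr, hr, emb2, emb2, Finsupp.mapDomain_apply inrNP_injective,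
      Finsupp.mapDomain_apply inrNP_injective] at h1
    simpa using h1

lemma content_join (b1 b2 : List NP) :
    content (b1.map inl' ++ b2.map inr') = emb1 (content b1) + emb2 (content b2) := by
  rw [content_append, content_map, content_map]
  rfl

/-- the set of length-additive factorizations is finite -/
lemma factorizations_finite (w : SZ) :
    {p : SZ × SZ | w = p.1 * p.2 ∧ lenZ w = lenZ p.1 + lenZ p.2}.Finite := by
  classical
  set F := {p : SZ × SZ | w = p.1 * p.2 ∧ lenZ w = lenZ p.1 + lenZ p.2} with hF
  set φ : SZ × SZ → List ℤ × ℕ :=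
    fun p => ((exists_redword p.1).choose ++ (exists_redword p.2).choose, lenZ p.1) with hφ
  have himg : φ '' F ⊆ {l : List ℤ | IsRedWord w l} ×ˢ Set.Iic (lenZ w) := by
    rintro z ⟨p, hp, rfl⟩
    obtain ⟨hp1, hp2⟩ := hp
    have h1 := (exists_redword p.1).choose_spec
    have h2 := (exists_redword p.2).choose_spec
    have hj := redword_join h1 h2 (by rw [← hp1]; exact hp2)
    rw [← hp1] at hj
    exact ⟨hj, by simp only [Set.mem_Iic, hφ]; omega⟩
  have hinj : Set.InjOn φ F := by
    rintro p hp q hq he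
    have h1 := (exists_redword p.1).choose_spec
    have h2 := (exists_redword q.1).choose_spec
    have hlen : lenZ p.1 = lenZ q.1 := congrArg Prod.snd he
    have hlist : (exists_redword p.1).choose ++ (exists_redword p.2).choose
        = (exists_redword q.1).choose ++ (exists_redword q.2).choose := congrArg Prod.fst he
    have htp : ((exists_redword p.1).choose ++ (exists_redword p.2).choose).take (lenZ p.1)
        = (exists_redword p.1).choose := by
      rw [← h1.1]
      exact List.take_left
    have htq : ((exists_redword q.1).choose ++ (exists_redword q.2).choose).take (lenZ q.1)
        = (exists_redword q.1).choose := by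
      rw [← h2.1]
      exact List.take_left
    have hfst : p.1 = q.1 := by
      rw [← h1.2, ← h2.2, ← htp, ← htq, hlist, hlen]
    have hsnd : p.2 = q.2 := by
      have e1 : p.2 = p.1⁻¹ * w := by rw [hp.1, inv_mul_cancel_left]
      have e2 : q.2 = q.1⁻¹ * w := by rw [hq.1, inv_mul_cancel_left]
      rw [e1, e2, hfst]
    exact Prod.ext hfst hsnd
  exact Set.Finite.of_finite_image
    (((redwords_finite w).prod (Set.finite_Iic (lenZ w))).subset himg) hinj

/-- the master splitting lemma -/
lemma split_main {w : SZ} {m1 m2 : NP →₀ ℕ} {a : List ℤ} {b : List NP2}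
    (hred : IsRedWord w a) (hcomp : Compatible a b)
    (hcont : content b = emb1 m1 + emb2 m2) :
    b = (leftsOf b).map inl' ++ (rightsOf b).map inr' ∧
    (a.take (leftsOf b).length).length = (leftsOf b).length ∧
    IsRedWord (((a.take (leftsOf b).length).map sZ).prod) (a.take (leftsOf b).length) ∧
    IsRedWord (((a.drop (leftsOf b).length).map sZ).prod) (a.drop (leftsOf b).length) ∧
    Compatible (a.take (leftsOf b).length) (leftsOf b) ∧
    Compatible (a.drop (leftsOf b).length) (rightsOf b) ∧
    content (leftsOf b) = m1 ∧ content (rightsOf b) = m2 ∧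
    w = (((a.take (leftsOf b).length).map sZ).prod) * (((a.drop (leftsOf b).length).map sZ).prod) ∧
    lenZ w = lenZ (((a.take (leftsOf b).length).map sZ).prod)
      + lenZ (((a.drop (leftsOf b).length).map sZ).prod) := by
  have hb := sorted_split b (compatible_chain_snd hcomp)
  set b1 := leftsOf b with hb1
  set b2 := rightsOf b with hb2
  set k := b1.length with hk
  have hlenab : a.length = b.length := hcomp.1
  have hlb : b.length = b1.length + b2.length := by
    rw [hb]; simp
  have hkle : k ≤ a.length := by omega
  have hlen1 : (a.take k).length = k := by
    rw [List.length_take]; omega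
  have hlen1' : (a.take k).length = (b1.map inl').length := by
    rw [hlen1, List.length_map]
  have ha : a.take k ++ a.drop k = a := List.take_append_drop k a
  have hcomp' : Compatible (a.take k ++ a.drop k) (b1.map inl' ++ b2.map inr') := by
    rw [ha, ← hb]; exact hcomp
  obtain ⟨hc1, hc2⟩ := compatible_split hlen1' hcomp'
  have hc1' : Compatible (a.take k) b1 := (compatible_map_iff inl'_strictMono).1 hc1
  have hc2' : Compatible (a.drop k) b2 := (compatible_map_iff inr'_strictMono).1 hc2
  have hred' : IsRedWord w (a.take k ++ a.drop k) := by rw [ha]; exact hred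
  obtain ⟨hr1, hr2, hw, hl⟩ := redword_append hred'
  have hcnt : emb1 (content b1) + emb2 (content b2) = emb1 m1 + emb2 m2 := by
    rw [← content_join, ← hb, hcont]
  obtain ⟨hm1, hm2⟩ := emb_cancel hcnt
  exact ⟨hb, hlen1, hr1, hr2, hc1', hc2', hm1, hm2, hw, hl⟩

/-- the joining lemma -/
lemma join_main {u v : SZ} {m1 m2 : NP →₀ ℕ} {a1 a2 : List ℤ} {b1 b2 : List NP}
    (h1 : IsRedWord u a1) (hc1 : Compatible a1 b1) (hm1 : content b1 = m1)
    (h2 : IsRedWord v a2) (hc2 : Compatible a2 b2) (hm2 : content b2 = m2)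
    (hl : lenZ (u * v) = lenZ u + lenZ v) :
    IsRedWord (u * v) (a1 ++ a2) ∧ Compatible (a1 ++ a2) (b1.map inl' ++ b2.map inr') ∧
    content (b1.map inl' ++ b2.map inr') = emb1 m1 + emb2 m2 ∧
    leftsOf (b1.map inl' ++ b2.map inr') = b1 ∧
    rightsOf (b1.map inl' ++ b2.map inr') = b2 ∧
    (a1 ++ a2).take b1.length = a1 ∧ (a1 ++ a2).drop b1.length = a2 ∧
    ((a1.map sZ).prod) = u ∧ ((a2.map sZ).prod) = v := by
  have hL : leftsOf (b1.map inl' ++ b2.map inr') = b1 := by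
    rw [leftsOf_append, leftsOf_inl, leftsOf_inr, List.append_nil]
  have hR : rightsOf (b1.map inl' ++ b2.map inr') = b2 := by
    rw [rightsOf_append, rightsOf_inl, rightsOf_inr, List.nil_append]
  have hlen : a1.length = b1.length := hc1.1
  have htake : (a1 ++ a2).take b1.length = a1 := by
    rw [← hlen]; exact List.take_left
  have hdrop : (a1 ++ a2).drop b1.length = a2 := by
    rw [← hlen]; exact List.drop_left
  refine ⟨redword_join h1 h2 hl, compatible_join hc1 hc2, ?_, hL, hR, htake, hdrop, h1.2, h2.2⟩
  rw [content_join, hm1, hm2]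
/-- The coproduct formula for Stanley symmetric functions,
`Δ(F_w) = ∑_{w ≐ uv} F_u ⊗ F_v`, in coefficient form: the coefficient of
`x^{m₁} ⊗ x^{m₂}` in `F_w` evaluated on two alphabets equals the corresponding
sum over length-additive factorizations `w = u v`. -/
theorem stanley_coproduct (w : SZ) (m1 m2 : NP →₀ ℕ) :
    stanleyCoeff NP2 w (emb1 m1 + emb2 m2) =
      ∑ᶠ p ∈ {p : SZ × SZ | w = p.1 * p.2 ∧ lenZ w = lenZ p.1 + lenZ p.2},
        stanleyCoeff NP p.1 m1 * stanleyCoeff NP p.2 m2 := by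
  classical
  have hX := coeffSet_finite NP2 w (emb1 m1 + emb2 m2)
  have hF := factorizations_finite w
  rw [finsum_mem_eq_finite_toFinset_sum _ hF]
  rw [stanleyCoeff_eq_toFinset_card]
  set π : List ℤ × List NP2 → SZ × SZ := fun x =>
    ((((x.1.take (leftsOf x.2).length).map sZ).prod),
      (((x.1.drop (leftsOf x.2).length).map sZ).prod)) with hπ
  have hmapsto : ∀ x ∈ (coeffSet_finite NP2 w (emb1 m1 + emb2 m2)).toFinset,
      π x ∈ hF.toFinset := by
    intro x hx
    rw [Set.Finite.mem_toFinset] at hx ⊢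
    obtain ⟨h1, h2, h3⟩ := hx
    obtain ⟨_, _, _, _, _, _, _, _, hw, hl⟩ := split_main h1 h2 h3
    exact ⟨hw, hl⟩
  rw [Finset.card_eq_sum_card_fiberwise hmapsto]
  refine Finset.sum_congr rfl ?_
  intro p hp
  rw [Set.Finite.mem_toFinset] at hp
  rw [stanleyCoeff_eq_toFinset_card, stanleyCoeff_eq_toFinset_card, ← Finset.card_product]
  refine Finset.card_bij'
    (fun x _ => ((x.1.take (leftsOf x.2).length, leftsOf x.2),
      (x.1.drop (leftsOf x.2).length, rightsOf x.2)))
    (fun y _ => (y.1.1 ++ y.2.1, y.1.2.map inl' ++ y.2.2.map inr')) ?_ ?_ ?_ ?_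
  · intro x hx
    rw [Finset.mem_filter, Set.Finite.mem_toFinset] at hx
    obtain ⟨⟨h1, h2, h3⟩, hπx⟩ := hx
    obtain ⟨hb, hlen1, hr1, hr2, hc1, hc2, hm1', hm2', hw, hl⟩ := split_main h1 h2 h3
    rw [Finset.mem_product, Set.Finite.mem_toFinset, Set.Finite.mem_toFinset]
    have e1 : ((x.1.take (leftsOf x.2).length).map sZ).prod = p.1 := congrArg Prod.fst hπx
    have e2 : ((x.1.drop (leftsOf x.2).length).map sZ).prod = p.2 := congrArg Prod.snd hπx
    exact ⟨⟨e1 ▸ hr1, hc1, hm1'⟩, ⟨e2 ▸ hr2, hc2, hm2'⟩⟩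
  · intro y hy
    rw [Finset.mem_product, Set.Finite.mem_toFinset, Set.Finite.mem_toFinset] at hy
    obtain ⟨⟨h1, hcmp1, hm1'⟩, h2, hcmp2, hm2'⟩ := hy
    obtain ⟨hr, hcm, hct, hL, hR, htk, hdp, he1, he2⟩ :=
      join_main h1 hcmp1 hm1' h2 hcmp2 hm2' (by rw [← hp.1]; exact hp.2)
    rw [Finset.mem_filter, Set.Finite.mem_toFinset]
    constructor
    · exact ⟨by rw [hp.1]; exact hr, hcm, hct⟩
    · show π _ = p
      simp only [hπ]
      rw [hL, htk, hdp, he1, he2]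
  · intro x hx
    rw [Finset.mem_filter, Set.Finite.mem_toFinset] at hx
    obtain ⟨⟨h1, h2, h3⟩, _⟩ := hx
    obtain ⟨hb, _⟩ := split_main h1 h2 h3
    exact Prod.ext (List.take_append_drop _ _) hb.symm
  · intro y hy
    rw [Finset.mem_product, Set.Finite.mem_toFinset, Set.Finite.mem_toFinset] at hy
    obtain ⟨⟨h1, hcmp1, hm1'⟩, h2, hcmp2, hm2'⟩ := hy
    obtain ⟨hr, hcm, hct, hL, hR, htk, hdp, he1, he2⟩ :=
      join_main h1 hcmp1 hm1' h2 hcmp2 hm2' (by rw [← hp.1]; exact hp.2)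
    simp only [hL, hR, htk, hdp]
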